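/- Let M be a pointed metric space such that the pair (M, ℝ) has the Lip-BPB property and let K be a compact Hausdorff topological space. Then the pair (M, C(K, ℝ)) has the Lip-BPB property for Lipschitz compact maps, where C(K, ℝ) is the Banach space of real-valued continuous functions on K with the supremum norm. -/

import Mathlib

open Set Metric NNReal MeasureTheory

/-- A Lipschitz map vanishing at the base point `z`, i.e. an element of `Lip₀(M,Y)`. -/
def IsLip0 {M Y : Type*} [MetricSpace M] [NormedAddCommGroup Y]
    (z : M) (F : M → Y) : Prop :=
  (∃ K : ℝ≥0, LipschitzWith K F) ∧ F z = 0

/-- The Lipschitz norm `‖F‖_L = sup {‖F p - F q‖ / d(p,q) : p ≠ q}`. -/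
noncomputable def lipNorm {M Y : Type*} [MetricSpace M] [NormedAddCommGroup Y]
    (F : M → Y) : ℝ :=
  sSup {r : ℝ | ∃ p q : M, p ≠ q ∧ r = ‖F p - F q‖ / dist p q}

/-- `F` strongly attains its norm. -/
def StronglyAttains {M Y : Type*} [MetricSpace M] [NormedAddCommGroup Y]
    (F : M → Y) : Prop :=
  ∃ p q : M, p ≠ q ∧ ‖F p - F q‖ = lipNorm F * dist p q

/-- `F` is Lipschitz compact: its Lipschitz image is relatively compact. -/
def IsLipCompact {M Y : Type*} [MetricSpace M] [NormedAddCommGroup Y] [NormedSpace ℝ Y]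
    (F : M → Y) : Prop :=
  IsCompact (closure {y : Y | ∃ p q : M, p ≠ q ∧ y = (dist p q)⁻¹ • (F p - F q)})

/-- The pair `(M,Y)` has the Lip-BPB property witnessed by the function `η`. -/
def LipBPBWith (M : Type*) [MetricSpace M] (z : M)
    (Y : Type*) [NormedAddCommGroup Y] (η : ℝ → ℝ) : Prop :=
  (∀ ε > 0, η ε > 0) ∧
  ∀ ε > 0, ∀ F : M → Y, IsLip0 z F → lipNorm F = 1 →
    ∀ p q : M, p ≠ q → ‖F p - F q‖ > (1 - η ε) * dist p q →
      ∃ G : M → Y, IsLip0 z G ∧ ∃ r s : M, r ≠ s ∧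
        ‖G r - G s‖ = dist r s ∧ lipNorm G = 1 ∧
        lipNorm (fun x => G x - F x) < ε ∧
        (dist p r + dist q s) / dist p q < ε

/-- The pair `(M,Y)` has the Lip-BPB property. -/
def LipBPB (M : Type*) [MetricSpace M] (z : M)
    (Y : Type*) [NormedAddCommGroup Y] : Prop :=
  ∃ η : ℝ → ℝ, LipBPBWith M z Y η

/-- The pair `(M,Y)` has the Lip-BPB property for Lipschitz compact maps
witnessed by the function `η`. -/
def LipBPBCompactWith (M : Type*) [MetricSpace M] (z : M)
    (Y : Type*) [NormedAddCommGroup Y] [NormedSpace ℝ Y] (η : ℝ → ℝ) : Prop :=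
  (∀ ε > 0, η ε > 0) ∧
  ∀ ε > 0, ∀ F : M → Y, IsLip0 z F → IsLipCompact F → lipNorm F = 1 →
    ∀ p q : M, p ≠ q → ‖F p - F q‖ > (1 - η ε) * dist p q →
      ∃ G : M → Y, IsLip0 z G ∧ IsLipCompact G ∧ ∃ r s : M, r ≠ s ∧
        ‖G r - G s‖ = dist r s ∧ lipNorm G = 1 ∧
        lipNorm (fun x => G x - F x) < ε ∧
        (dist p r + dist q s) / dist p q < ε

/-- The pair `(M,Y)` has the Lip-BPB property for Lipschitz compact maps. -/
def LipBPBCompact (M : Type*) [MetricSpace M] (z : M)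
    (Y : Type*) [NormedAddCommGroup Y] [NormedSpace ℝ Y] : Prop :=
  ∃ η : ℝ → ℝ, LipBPBCompactWith M z Y η

/-- `SA(M,Y)` is dense in `Lip₀(M,Y)`. -/
def SADense (M : Type*) [MetricSpace M] (z : M)
    (Y : Type*) [NormedAddCommGroup Y] : Prop :=
  ∀ F : M → Y, IsLip0 z F → ∀ ε > 0,
    ∃ G : M → Y, IsLip0 z G ∧ StronglyAttains G ∧ lipNorm (fun x => G x - F x) < ε

/-- `SA_K(M,Y)` is dense in `Lipc(M,Y)`. -/
def SAKDense (M : Type*) [MetricSpace M] (z : M)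
    (Y : Type*) [NormedAddCommGroup Y] [NormedSpace ℝ Y] : Prop :=
  ∀ F : M → Y, IsLip0 z F → IsLipCompact F → ∀ ε > 0,
    ∃ G : M → Y, IsLip0 z G ∧ IsLipCompact G ∧ StronglyAttains G ∧
      lipNorm (fun x => G x - F x) < ε

section Helpers

variable {M Y : Type*} [MetricSpace M] [NormedAddCommGroup Y]

theorem lipNorm_nonneg (F : M → Y) : 0 ≤ lipNorm F :=
  Real.sSup_nonneg (by rintro r ⟨p, q, hpq, rfl⟩; positivity)

theorem lipNorm_bddAbove {F : M → Y} {K : ℝ≥0} (hF : LipschitzWith K F) :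
    BddAbove {r : ℝ | ∃ p q : M, p ≠ q ∧ r = ‖F p - F q‖ / dist p q} := by
  refine ⟨K, ?_⟩
  rintro r ⟨p, q, hpq, rfl⟩
  have hd : 0 < dist p q := dist_pos.2 hpq
  rw [div_le_iff₀ hd]
  calc ‖F p - F q‖ = dist (F p) (F q) := (dist_eq_norm _ _).symm
    _ ≤ K * dist p q := hF.dist_le_mul p q

theorem le_lipNorm {F : M → Y} {K : ℝ≥0} (hF : LipschitzWith K F) (p q : M) (hpq : p ≠ q) :
    ‖F p - F q‖ / dist p q ≤ lipNorm F :=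
  le_csSup (lipNorm_bddAbove hF) ⟨p, q, hpq, rfl⟩

theorem norm_sub_le_lipNorm {F : M → Y} (hF : ∃ K : ℝ≥0, LipschitzWith K F) (p q : M) :
    ‖F p - F q‖ ≤ lipNorm F * dist p q := by
  rcases eq_or_ne p q with rfl | h
  · simp
  obtain ⟨K, hK⟩ := hF
  have hd : 0 < dist p q := dist_pos.2 h
  have h1 : ‖F p - F q‖ / dist p q ≤ lipNorm F := le_lipNorm hK p q h
  calc ‖F p - F q‖ = ‖F p - F q‖ / dist p q * dist p q := by field_simp
    _ ≤ lipNorm F * dist p q := mul_le_mul_of_nonneg_right h1 hd.le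

theorem lipNorm_le {F : M → Y} {C : ℝ} (hC : 0 ≤ C)
    (h : ∀ p q : M, p ≠ q → ‖F p - F q‖ ≤ C * dist p q) : lipNorm F ≤ C := by
  refine Real.sSup_le ?_ hC
  rintro r ⟨p, q, hpq, rfl⟩
  rw [div_le_iff₀ (dist_pos.2 hpq)]
  exact h p q hpq

theorem lipschitzWith_const_smul [NormedSpace ℝ Y] {F : M → Y} {K : ℝ≥0}
    (hF : LipschitzWith K F) {c : ℝ} (hc : 0 ≤ c) :
    LipschitzWith (⟨c, hc⟩ * K) (fun x => c • F x) := by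
  refine LipschitzWith.of_dist_le_mul fun x y => ?_
  have h1 : dist (c • F x) (c • F y) = c * dist (F x) (F y) := by
    rw [dist_smul₀, Real.norm_eq_abs, abs_of_nonneg hc]
  rw [h1]
  push_cast
  have h2 := hF.dist_le_mul x y
  have h3 : (0:ℝ) ≤ dist (F x) (F y) := dist_nonneg
  have h4 : ((⟨c, hc⟩ * K : ℝ≥0) : ℝ) = c * K := rfl
  rw [h4]
  nlinarith

theorem lipNorm_smul_le [NormedSpace ℝ Y] {F : M → Y} (hF : ∃ K : ℝ≥0, LipschitzWith K F)
    {c : ℝ} (hc : 0 ≤ c) : lipNorm (fun x => c • F x) ≤ c * lipNorm F := by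
  refine lipNorm_le (mul_nonneg hc (lipNorm_nonneg F)) fun p q hpq => ?_
  have : c • F p - c • F q = c • (F p - F q) := (smul_sub c _ _).symm
  rw [this, norm_smul, Real.norm_eq_abs, abs_of_nonneg hc, mul_assoc]
  exact mul_le_mul_of_nonneg_left (norm_sub_le_lipNorm hF p q) hc

theorem lipNorm_smul [NormedSpace ℝ Y] {F : M → Y} (hF : ∃ K : ℝ≥0, LipschitzWith K F)
    {c : ℝ} (hc : 0 < c) : lipNorm (fun x => c • F x) = c * lipNorm F := by
  obtain ⟨K, hK⟩ := hF
  refine le_antisymm (lipNorm_smul_le ⟨K, hK⟩ hc.le) ?_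
  have h2 : lipNorm (fun x => c⁻¹ • (c • F x)) ≤ c⁻¹ * lipNorm (fun x => c • F x) :=
    lipNorm_smul_le ⟨⟨c, hc.le⟩ * K, lipschitzWith_const_smul hK hc.le⟩ (inv_nonneg.2 hc.le)
  simp only [inv_smul_smul₀ hc.ne'] at h2
  calc c * lipNorm F ≤ c * (c⁻¹ * lipNorm (fun x => c • F x)) :=
        mul_le_mul_of_nonneg_left h2 hc.le
    _ = lipNorm (fun x => c • F x) := by field_simp

theorem lipschitzWith_sub {A B : M → Y} {Ka Kb : ℝ≥0} (hA : LipschitzWith Ka A)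
    (hB : LipschitzWith Kb B) : LipschitzWith (Ka + Kb) (fun x => A x - B x) := by
  refine LipschitzWith.of_dist_le_mul fun x y => ?_
  rw [dist_eq_norm]
  have h0 : A x - B x - (A y - B y) = (A x - A y) - (B x - B y) := by abel
  rw [h0]
  push_cast
  have h1 := hA.dist_le_mul x y
  have h2 := hB.dist_le_mul x y
  rw [dist_eq_norm] at h1 h2
  calc ‖A x - A y - (B x - B y)‖ ≤ ‖A x - A y‖ + ‖B x - B y‖ := norm_sub_le _ _
    _ ≤ Ka * dist x y + Kb * dist x y := add_le_add h1 h2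
    _ = (↑Ka + ↑Kb) * dist x y := by ring

theorem lipNorm_add_le {A B : M → Y} (hA : ∃ K : ℝ≥0, LipschitzWith K A)
    (hB : ∃ K : ℝ≥0, LipschitzWith K B) :
    lipNorm (fun x => A x + B x) ≤ lipNorm A + lipNorm B := by
  refine lipNorm_le (add_nonneg (lipNorm_nonneg A) (lipNorm_nonneg B)) fun p q hpq => ?_
  have h0 : A p + B p - (A q + B q) = (A p - A q) + (B p - B q) := by abel
  rw [h0]
  calc ‖(A p - A q) + (B p - B q)‖ ≤ ‖A p - A q‖ + ‖B p - B q‖ := norm_add_le _ _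
    _ ≤ lipNorm A * dist p q + lipNorm B * dist p q :=
        add_le_add (norm_sub_le_lipNorm hA p q) (norm_sub_le_lipNorm hB p q)
    _ = (lipNorm A + lipNorm B) * dist p q := by ring

end Helpers


set_option maxHeartbeats 1000000 in
/-- If `(M, ℝ)` has the Lip-BPB property and `K` is a compact Hausdorff space, then
`(M, C(K, ℝ))` has the Lip-BPB property for Lipschitz compact maps. -/
theorem lipBPBCompact_continuousMap_real {M : Type*} [MetricSpace M] [CompleteSpace M]
    (z : M) (hM : LipBPB M z ℝ)
    (K : Type*) [TopologicalSpace K] [CompactSpace K] [T2Space K] :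
    LipBPBCompact M z C(K, ℝ) := by
  obtain ⟨η, hηpos, hη⟩ := hM
  refine ⟨fun t => min (η (t / 4)) (min (t / 4) (1 / 2)),
    fun t ht => lt_min (hηpos _ (by linarith)) (lt_min (by linarith) (by norm_num)), ?_⟩
  intro ε hε F hF0 hFc hF1 p q hpq hFpq
  simp only [] at hFpq
  set η' : ℝ := min (η (ε / 4)) (min (ε / 4) (1 / 2)) with hη'def
  have hη'1 : η' ≤ η (ε / 4) := min_le_left _ _
  have hη'2 : η' ≤ ε / 4 := le_trans (min_le_right _ _) (min_le_left _ _)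
  have hη'3 : η' ≤ 1 / 2 := le_trans (min_le_right _ _) (min_le_right _ _)
  have hη'pos : 0 < η' := lt_min (hηpos _ (by linarith)) (lt_min (by linarith) (by norm_num))
  have hd : 0 < dist p q := dist_pos.2 hpq
  obtain ⟨KF, hKF⟩ := hF0.1
  -- find t₀ where the norm is nearly attained
  obtain ⟨t₀, ht₀⟩ : ∃ t₀ : K, (1 - η') * dist p q < ‖(F p - F q) t₀‖ := by
    by_contra hcon
    push_neg at hcon
    have h1 : ‖F p - F q‖ ≤ (1 - η') * dist p q :=
      (ContinuousMap.norm_le _ (by nlinarith)).2 hcon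
    linarith
  -- the scalar functional h = δ_{t₀} ∘ F
  set h : M → ℝ := fun x => F x t₀ with hhdef
  have hhLip : LipschitzWith KF h := by
    refine LipschitzWith.of_dist_le_mul fun x y => ?_
    calc dist (h x) (h y) ≤ dist (F x) (F y) := ContinuousMap.dist_apply_le_dist t₀
      _ ≤ KF * dist x y := hKF.dist_le_mul x y
  have hhz : h z = 0 := by simp only [hhdef, hF0.2, ContinuousMap.zero_apply]
  have hsub : ∀ x y : M, ‖h x - h y‖ ≤ ‖F x - F y‖ := fun x y => by
    have h1 := ContinuousMap.norm_coe_le_norm (F x - F y) t₀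
    simpa only [hhdef, ContinuousMap.sub_apply] using h1
  have hFd : ∀ x y : M, ‖F x - F y‖ ≤ dist x y := fun x y => by
    have := norm_sub_le_lipNorm ⟨KF, hKF⟩ x y
    rwa [hF1, one_mul] at this
  set L := lipNorm h with hLdef
  have hL1 : L ≤ 1 := by
    refine lipNorm_le zero_le_one fun x y hxy => ?_
    rw [one_mul]
    exact le_trans (hsub x y) (hFd x y)
  have hhpq : (1 - η') * dist p q < ‖h p - h q‖ := by
    have : (F p - F q) t₀ = h p - h q := by
      simp only [hhdef, ContinuousMap.sub_apply]
    rwa [this] at ht₀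
  have hLlb : 1 - η' < L := by
    have h2 : (1 - η') < ‖h p - h q‖ / dist p q := by
      rw [lt_div_iff₀ hd]; exact hhpq
    exact lt_of_lt_of_le h2 (le_lipNorm hhLip p q hpq)
  have hLpos : 0 < L := by linarith
  -- normalize
  set f : M → ℝ := fun x => L⁻¹ • h x with hfdef
  have hfLip : LipschitzWith (⟨L⁻¹, by positivity⟩ * KF) f :=
    lipschitzWith_const_smul hhLip (by positivity)
  have hf1 : lipNorm f = 1 := by
    rw [hfdef, lipNorm_smul ⟨KF, hhLip⟩ (inv_pos.2 hLpos), ← hLdef, inv_mul_cancel₀ hLpos.ne']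
  have hinv : (1 : ℝ) ≤ L⁻¹ := (one_le_inv₀ hLpos).2 hL1
  have hfpq : ‖f p - f q‖ > (1 - η (ε / 4)) * dist p q := by
    have h1 : f p - f q = L⁻¹ • (h p - h q) := by
      simp only [hfdef, smul_sub]
    rw [h1, norm_smul, Real.norm_eq_abs, abs_of_nonneg (by positivity : (0:ℝ) ≤ L⁻¹)]
    have h2 : ‖h p - h q‖ ≤ L⁻¹ * ‖h p - h q‖ := by nlinarith [norm_nonneg (h p - h q)]
    have h3 : (1 - η (ε / 4)) * dist p q ≤ (1 - η') * dist p q :=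
      mul_le_mul_of_nonneg_right (by linarith) hd.le
    linarith
  -- apply the scalar Lip-BPB property
  obtain ⟨g, hg0, r, s, hrs, hgrs, hg1, hgf, hprqs⟩ :=
    hη (ε / 4) (by linarith) f ⟨⟨_, hfLip⟩, by simp only [hfdef, hhz, smul_zero]⟩ hf1
      p q hpq hfpq
  obtain ⟨Kg, hKg⟩ := hg0.1
  have hdrs : 0 < dist r s := dist_pos.2 hrs
  -- g is close to h in Lipschitz norm
  have hgh : lipNorm (fun x => g x - h x) < ε / 2 := by
    have e1 : lipNorm (fun x => f x - h x) ≤ η' := by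
      have hrw : (fun x => f x - h x) = fun x => (L⁻¹ - 1) • h x := by
        funext x
        simp only [hfdef, smul_eq_mul, sub_mul, one_mul]
      rw [hrw]
      calc lipNorm (fun x => (L⁻¹ - 1) • h x) ≤ (L⁻¹ - 1) * L :=
            lipNorm_smul_le ⟨KF, hhLip⟩ (by linarith)
        _ = 1 - L := by field_simp
        _ ≤ η' := by linarith
    have e2 : (fun x => g x - h x) = fun x => (g x - f x) + (f x - h x) := by
      funext x; ring
    have e3 : lipNorm (fun x => g x - h x) ≤
        lipNorm (fun x => g x - f x) + lipNorm (fun x => f x - h x) := by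
      rw [e2]
      exact lipNorm_add_le ⟨_, lipschitzWith_sub hKg hfLip⟩
        ⟨_, lipschitzWith_sub hfLip hhLip⟩
    have : lipNorm (fun x => g x - f x) < ε / 4 := hgf
    linarith
  -- equicontinuity neighborhood from Lipschitz compactness
  set Cl : Set C(K, ℝ) :=
    closure {y : C(K, ℝ) | ∃ a b : M, a ≠ b ∧ y = (dist a b)⁻¹ • (F a - F b)} with hCldef
  have hClc : IsCompact Cl := hFc
  obtain ⟨T, hTC, hTfin, hTcover⟩ := hClc.finite_cover_balls (show (0:ℝ) < ε / 12 by linarith)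
  set V : Set K := ⋂ v ∈ T, {t : K | dist (v t) (v t₀) < ε / 12} with hVdef
  have hVopen : IsOpen V :=
    hTfin.isOpen_biInter fun v _ =>
      isOpen_lt ((map_continuous v).dist (Continuous.comp (map_continuous v) continuous_const)) continuous_const
  have ht₀V : t₀ ∈ V := by
    simp only [hVdef, mem_iInter, mem_setOf_eq]
    intro v _
    simp [dist_self]; linarith
  have hVkey : ∀ t ∈ V, ∀ v ∈ Cl, dist (v t) (v t₀) < ε / 4 := by
    intro t ht v hv
    obtain ⟨w, hwT, hw⟩ : ∃ w ∈ T, v ∈ ball w (ε / 12) := by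
      have := hTcover hv
      simpa only [mem_iUnion, exists_prop] using this
    have h1 : dist (v t) (w t) ≤ dist v w := ContinuousMap.dist_apply_le_dist t
    have h2 : dist (w t₀) (v t₀) ≤ dist v w := by
      rw [dist_comm]; exact ContinuousMap.dist_apply_le_dist t₀
    have h3 : dist (w t) (w t₀) < ε / 12 := by
      have := mem_iInter₂.1 ht w hwT
      exact this
    have hvw : dist v w < ε / 12 := mem_ball.1 hw
    calc dist (v t) (v t₀) ≤ dist (v t) (w t) + dist (w t) (w t₀) + dist (w t₀) (v t₀) :=
          dist_triangle4 _ _ _ _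
      _ < ε / 4 := by linarith
  -- Urysohn bump
  obtain ⟨u, hu0, hu1, hu01⟩ :=
    exists_continuous_zero_one_of_isClosed hVopen.isClosed_compl isClosed_singleton
      (Set.disjoint_singleton_right.2 (by simpa using ht₀V))
  have hut₀ : u t₀ = 1 := by
    have := hu1 (mem_singleton t₀)
    simpa using this
  -- the new map G
  set G : M → C(K, ℝ) := fun x => g x • u + (1 - u) * F x with hGdef
  have happ : ∀ (x : M) (t : K), G x t = g x * u t + (1 - u t) * F x t := by
    intro x t
    simp only [hGdef, ContinuousMap.add_apply, ContinuousMap.smul_apply,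
      ContinuousMap.mul_apply, ContinuousMap.sub_apply, ContinuousMap.one_apply, smul_eq_mul]
  have hgd : ∀ x y : M, ‖g x - g y‖ ≤ dist x y := fun x y => by
    have := norm_sub_le_lipNorm ⟨Kg, hKg⟩ x y
    rwa [hg1, one_mul] at this
  have hFtd : ∀ (x y : M) (t : K), |F x t - F y t| ≤ dist x y := fun x y t => by
    have h1 := ContinuousMap.norm_coe_le_norm (F x - F y) t
    rw [ContinuousMap.sub_apply, Real.norm_eq_abs] at h1
    exact le_trans h1 (hFd x y)
  have hGxy : ∀ x y : M, ‖G x - G y‖ ≤ dist x y := by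
    intro x y
    refine (ContinuousMap.norm_le _ dist_nonneg).2 fun t => ?_
    rw [ContinuousMap.sub_apply, happ, happ, Real.norm_eq_abs]
    have h01 := hu01 t
    have hb1 : |g x - g y| ≤ dist x y := by
      have := hgd x y; rwa [Real.norm_eq_abs] at this
    have hb2 := hFtd x y t
    have e : g x * u t + (1 - u t) * F x t - (g y * u t + (1 - u t) * F y t)
        = u t * (g x - g y) + (1 - u t) * (F x t - F y t) := by ring
    rw [e]
    have e2 := abs_add_le (u t * (g x - g y)) ((1 - u t) * (F x t - F y t))
    rw [abs_mul, abs_mul, abs_of_nonneg h01.1, abs_of_nonneg (by linarith [h01.2] : (0:ℝ) ≤ 1 - u t)] at e2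
    nlinarith [abs_nonneg (g x - g y), abs_nonneg (F x t - F y t), h01.1, h01.2]
  have hGz : G z = 0 := by
    ext t
    rw [happ, hg0.2, hF0.2]
    simp
  have hGLip : LipschitzWith 1 G := by
    refine LipschitzWith.of_dist_le_mul fun x y => ?_
    rw [dist_eq_norm]
    simpa using hGxy x y
  have hGrs : ‖G r - G s‖ = dist r s := by
    refine le_antisymm (hGxy r s) ?_
    have h1 := ContinuousMap.norm_coe_le_norm (G r - G s) t₀
    rw [ContinuousMap.sub_apply, happ, happ, hut₀] at h1
    have e : g r * 1 + (1 - 1) * F r t₀ - (g s * 1 + (1 - 1) * F s t₀) = g r - g s := by ring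
    rw [e, hgrs] at h1
    exact h1
  have hGnorm : lipNorm G = 1 := by
    refine le_antisymm (lipNorm_le zero_le_one fun x y hxy => by rw [one_mul]; exact hGxy x y) ?_
    have h1 := le_lipNorm hGLip r s hrs
    rwa [hGrs, div_self hdrs.ne'] at h1
  -- closeness of G to F
  have hGF : lipNorm (fun x => G x - F x) < ε := by
    have hghle : lipNorm (fun x => g x - h x) ≤ ε / 2 := le_of_lt hgh
    refine lt_of_le_of_lt (lipNorm_le (C := 3 * ε / 4) (by linarith) ?_) (by linarith)
    intro x y hxy
    have hdxy : 0 < dist x y := dist_pos.2 hxy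
    refine (ContinuousMap.norm_le _ (by positivity)).2 fun t => ?_
    have happt : (G x - F x - (G y - F y)) t
        = u t * ((g x - g y) - (F x t - F y t)) := by
      simp only [ContinuousMap.sub_apply]
      rw [happ, happ]
      ring
    rw [happt, Real.norm_eq_abs, abs_mul]
    have h01 := hu01 t
    have hut : |u t| ≤ 1 := by rw [abs_of_nonneg h01.1]; exact h01.2
    rcases eq_or_ne (u t) 0 with h0 | h0
    · rw [h0]; simp; positivity
    · have htV : t ∈ V := by
        by_contra hcnt
        have := hu0 (show t ∈ Vᶜ from hcnt)
        exact h0 this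
      have hb1 : |(g x - g y) - (F x t₀ - F y t₀)| ≤ ε / 2 * dist x y := by
        have h1 := norm_sub_le_lipNorm ⟨_, lipschitzWith_sub hKg hhLip⟩ x y
        have h2 : lipNorm (fun x => g x - h x) * dist x y ≤ ε / 2 * dist x y :=
          mul_le_mul_of_nonneg_right hghle hdxy.le
        simp only [hhdef, Real.norm_eq_abs] at h1
        calc |(g x - g y) - (F x t₀ - F y t₀)| = |g x - F x t₀ - (g y - F y t₀)| := by ring_nf
          _ ≤ lipNorm (fun x => g x - h x) * dist x y := h1
          _ ≤ ε / 2 * dist x y := h2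
      have hb2 : |(F x t - F y t) - (F x t₀ - F y t₀)| ≤ ε / 4 * dist x y := by
        set v : C(K, ℝ) := (dist x y)⁻¹ • (F x - F y) with hvdef
        have hvmem : v ∈ Cl := subset_closure ⟨x, y, hxy, rfl⟩
        have hkey := hVkey t htV v hvmem
        have hv1 : v t = (dist x y)⁻¹ * (F x t - F y t) := by
          simp only [hvdef, ContinuousMap.smul_apply, ContinuousMap.sub_apply, smul_eq_mul]
        have hv2 : v t₀ = (dist x y)⁻¹ * (F x t₀ - F y t₀) := by
          simp only [hvdef, ContinuousMap.smul_apply, ContinuousMap.sub_apply, smul_eq_mul]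
        rw [Real.dist_eq, hv1, hv2, ← mul_sub, abs_mul,
          abs_of_nonneg (by positivity : (0:ℝ) ≤ (dist x y)⁻¹)] at hkey
        have := mul_lt_mul_of_pos_left hkey hdxy
        rw [← mul_assoc, mul_inv_cancel₀ hdxy.ne', one_mul] at this
        linarith
      have htri : |(g x - g y) - (F x t - F y t)|
          ≤ |(g x - g y) - (F x t₀ - F y t₀)| + |(F x t - F y t) - (F x t₀ - F y t₀)| := by
        have e : (g x - g y) - (F x t - F y t)
            = ((g x - g y) - (F x t₀ - F y t₀)) - ((F x t - F y t) - (F x t₀ - F y t₀)) := by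
          ring
        rw [e]
        exact abs_sub _ _
      nlinarith [abs_nonneg ((g x - g y) - (F x t - F y t)), hut,
        abs_nonneg (u t)]
  -- Lipschitz compactness of G
  have hGcomp : IsLipCompact G := by
    set Φ : ℝ × C(K, ℝ) → C(K, ℝ) := fun cv => cv.1 • u + (1 - u) * cv.2 with hΦdef
    have hΦc : Continuous Φ := by
      apply Continuous.add
      · exact continuous_fst.smul continuous_const
      · exact continuous_const.mul continuous_snd
    have hS : IsCompact (Φ '' (Icc (-1 : ℝ) 1 ×ˢ Cl)) :=
      (isCompact_Icc.prod hClc).image hΦc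
    have hsubset : {y : C(K, ℝ) | ∃ a b : M, a ≠ b ∧ y = (dist a b)⁻¹ • (G a - G b)}
        ⊆ Φ '' (Icc (-1 : ℝ) 1 ×ˢ Cl) := by
      rintro y ⟨a, b, hab, rfl⟩
      have hdab : 0 < dist a b := dist_pos.2 hab
      refine ⟨⟨(dist a b)⁻¹ * (g a - g b), (dist a b)⁻¹ • (F a - F b)⟩, ⟨?_, ?_⟩, ?_⟩
      · rw [mem_Icc, ← abs_le, abs_mul, abs_of_nonneg (by positivity : (0:ℝ) ≤ (dist a b)⁻¹)]
        have h1 : |g a - g b| ≤ dist a b := by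
          have := hgd a b; rwa [Real.norm_eq_abs] at this
        calc (dist a b)⁻¹ * |g a - g b| ≤ (dist a b)⁻¹ * dist a b :=
              mul_le_mul_of_nonneg_left h1 (by positivity)
          _ = 1 := inv_mul_cancel₀ hdab.ne'
      · exact subset_closure ⟨a, b, hab, rfl⟩
      · ext t
        simp only [hΦdef, ContinuousMap.add_apply, ContinuousMap.smul_apply,
          ContinuousMap.mul_apply, ContinuousMap.sub_apply, ContinuousMap.one_apply,
          smul_eq_mul]
        rw [happ, happ]
        ring
    exact hS.of_isClosed_subset isClosed_closure (closure_minimal hsubset hS.isClosed)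
  refine ⟨G, ⟨⟨1, hGLip⟩, hGz⟩, hGcomp, r, s, hrs, hGrs, hGnorm, hGF, ?_⟩
  exact lt_of_lt_of_le hprqs (by linarith)
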